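/- arXiv:1209.4551 — 2 statements merged into one kernel-verified Lean document; each statement's English description precedes it below -/
import Mathlib

section
/- Let x_1, …, x_n ∈ ℝ^p, let μ̂ = (1/n) Σ_{i=1}^n x_i be the sample mean, and let S = (1/n) Σ_{i=1}^n (x_i − μ̂)(x_i − μ̂)ᵀ be the sample covariance matrix. Assume S is positive definite. Then for every positive definite p×p real symmetric matrix Σ, n·log det Σ + Σ_{i=1}^n (x_i − μ̂)ᵀ Σ⁻¹ (x_i − μ̂) ≥ n·log det S + n·p, with equality if and only if Σ = S. Equivalently, S is the unique maximizer over positive definite Σ of the Gaussian likelihood ∏_{i=1}^n f_{N(μ̂,Σ)}(x_i); hence S is the maximum likelihood estimate of the covariance matrix. -/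
open Matrix

-- trace = sum of eigenvalues
lemma aux_trace_eq_sum_eig {p : ℕ} {M : Matrix (Fin p) (Fin p) ℝ} (hM : M.IsHermitian) :
    M.trace = ∑ i, hM.eigenvalues i := by
  conv_lhs => rw [hM.spectral_theorem]
  rw [Unitary.conjStarAlgAut_apply, trace_mul_cycle]
  rw [(Matrix.mem_unitaryGroup_iff').mp (hM.eigenvectorUnitary).2, one_mul]
  simp [Matrix.trace, Matrix.diag]

lemma aux_det_eq_prod_eig {p : ℕ} {M : Matrix (Fin p) (Fin p) ℝ} (hM : M.IsHermitian) :
    M.det = ∏ i, hM.eigenvalues i := by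
  simpa using hM.det_eq_prod_eigenvalues

lemma aux_eq_one_of_eig {p : ℕ} {M : Matrix (Fin p) (Fin p) ℝ} (hM : M.IsHermitian)
    (h : ∀ i, hM.eigenvalues i = 1) : M = 1 := by
  have : Matrix.diagonal (RCLike.ofReal ∘ hM.eigenvalues) = (1 : Matrix (Fin p) (Fin p) ℝ) := by
    have h2 : (RCLike.ofReal ∘ hM.eigenvalues : Fin p → ℝ) = fun _ => (1 : ℝ) := by
      funext i; simp [h i]
    rw [h2, Matrix.diagonal_one]
  rw [hM.spectral_theorem, this, Unitary.conjStarAlgAut_apply, mul_one,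
    (Matrix.mem_unitaryGroup_iff).mp (hM.eigenvectorUnitary).2]


lemma aux_key {p : ℕ} {M : Matrix (Fin p) (Fin p) ℝ} (hM : M.PosDef) :
    Real.log M.det + p ≤ M.trace ∧ (M.trace = Real.log M.det + p ↔ M = 1) := by
  have hdet : M.det = ∏ i, hM.1.eigenvalues i := by simpa using hM.1.det_eq_prod_eigenvalues
  have hpos : ∀ i, 0 < hM.1.eigenvalues i := hM.eigenvalues_pos
  have hlogdet : Real.log M.det = ∑ i, Real.log (hM.1.eigenvalues i) := by
    rw [hdet, Real.log_prod]
    exact fun i _ => (hpos i).ne'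
  have htr : M.trace = ∑ i, hM.1.eigenvalues i := aux_trace_eq_sum_eig hM.1
  have hterm : ∀ i, Real.log (hM.1.eigenvalues i) + 1 ≤ hM.1.eigenvalues i := fun i => by
    have := Real.log_le_sub_one_of_pos (hpos i)
    linarith
  have hsum : Real.log M.det + p ≤ M.trace := by
    rw [hlogdet, htr]
    calc (∑ i, Real.log (hM.1.eigenvalues i)) + (p : ℝ)
        = ∑ i : Fin p, (Real.log (hM.1.eigenvalues i) + 1) := by
          rw [Finset.sum_add_distrib]; simp
      _ ≤ ∑ i, hM.1.eigenvalues i := Finset.sum_le_sum fun i _ => hterm i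
  refine ⟨hsum, ⟨fun heq => ?_, fun heq => ?_⟩⟩
  · -- equality implies all eigenvalues are 1
    apply aux_eq_one_of_eig hM.1
    by_contra hc
    push_neg at hc
    obtain ⟨j, hj⟩ := hc
    have hstrict : Real.log (hM.1.eigenvalues j) + 1 < hM.1.eigenvalues j := by
      have := Real.log_lt_sub_one_of_pos (hpos j) hj
      linarith
    have : Real.log M.det + p < M.trace := by
      rw [hlogdet, htr]
      calc (∑ i, Real.log (hM.1.eigenvalues i)) + (p : ℝ)
          = ∑ i : Fin p, (Real.log (hM.1.eigenvalues i) + 1) := by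
            rw [Finset.sum_add_distrib]; simp
        _ < ∑ i, hM.1.eigenvalues i :=
            Finset.sum_lt_sum (fun i _ => hterm i) ⟨j, Finset.mem_univ j, hstrict⟩
    linarith [heq]
  · subst heq
    simp [Matrix.trace_one]

lemma aux_congr_posDef {p : ℕ} {C R : Matrix (Fin p) (Fin p) ℝ} (hC : C.PosDef)
    (hR : R.IsHermitian) (hRu : IsUnit R) : (R * C * R).PosDef := by
  have hRt : Rᵀ = R := by
    have := hR.eq
    simpa [Matrix.conjTranspose_eq_transpose_of_trivial] using this
  rw [posDef_iff_dotProduct_mulVec]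
  constructor
  · unfold Matrix.IsHermitian
    rw [conjTranspose_mul, conjTranspose_mul, hR.eq, hC.1.eq]
    rw [mul_assoc]
  · intro v hv
    have hRvI : Function.Injective (R.mulVec) := Matrix.mulVec_injective_iff_isUnit.mpr hRu
    have hRv : R *ᵥ v ≠ 0 := fun h => hv (hRvI (by simpa using h))
    have := hC.dotProduct_mulVec_pos hRv
    have key : star v ⬝ᵥ ((R * C * R) *ᵥ v) = star (R *ᵥ v) ⬝ᵥ (C *ᵥ (R *ᵥ v)) := by
      rw [← Matrix.mulVec_mulVec, ← Matrix.mulVec_mulVec, Matrix.dotProduct_mulVec]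
      simp only [star_trivial]
      rw [← Matrix.mulVec_transpose, hRt]
    rw [key]
    exact this

lemma aux_quad_trace {p : ℕ} (M : Matrix (Fin p) (Fin p) ℝ) (v : Fin p → ℝ) :
    v ⬝ᵥ (M *ᵥ v) = (M * vecMulVec v v).trace := by
  simp only [Matrix.trace, Matrix.diag, Matrix.mul_apply, Matrix.vecMulVec_apply,
    dotProduct, Matrix.mulVec, Finset.mul_sum, Finset.sum_mul]
  congr 1; funext i; congr 1; funext j; ring

/-- The density of the multivariate Gaussian `N(μ, S)` with respect to Lebesgue measure:
`x ↦ (2π)^(-n/2) (det S)^(-1/2) exp(-(x-μ)ᵀ S⁻¹ (x-μ) / 2)`. -/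
noncomputable def gaussianPdfReal {n : ℕ} (μ : Fin n → ℝ) (S : Matrix (Fin n) (Fin n) ℝ)
    (x : Fin n → ℝ) : ℝ :=
  ((2 * Real.pi) ^ n * S.det) ^ (-(1 : ℝ) / 2) *
    Real.exp (-((x - μ) ⬝ᵥ (S⁻¹ *ᵥ (x - μ))) / 2)

/-- Let `μ̂` be the sample mean and `S = (1/n) ∑ i (x_i-μ̂)(x_i-μ̂)ᵀ` the
sample covariance, assumed positive definite. For every positive definite `C`,
`n log det C + ∑ i (x_i-μ̂)ᵀ C⁻¹ (x_i-μ̂) ≥ n log det S + n p`, with equality iff `C = S`;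
equivalently, `S` is the unique maximizer of the Gaussian likelihood
`∏ i, f_{N(μ̂,C)}(x_i)` over positive definite `C`. Hence `S` is the MLE of the covariance. -/
theorem mle_gaussian_covariance {p n : ℕ} (hn : 1 ≤ n)
    (x : Fin n → Fin p → ℝ)
    (μhat : Fin p → ℝ) (hμhat : μhat = (n : ℝ)⁻¹ • ∑ i, x i)
    (S : Matrix (Fin p) (Fin p) ℝ)
    (hS : S = (n : ℝ)⁻¹ • ∑ i, vecMulVec (x i - μhat) (x i - μhat))
    (hSpd : S.PosDef) :
    (∀ C : Matrix (Fin p) (Fin p) ℝ, C.PosDef →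
      ((n : ℝ) * Real.log S.det + (n : ℝ) * (p : ℝ)
          ≤ (n : ℝ) * Real.log C.det + ∑ i, (x i - μhat) ⬝ᵥ (C⁻¹ *ᵥ (x i - μhat))) ∧
      ((n : ℝ) * Real.log C.det + ∑ i, (x i - μhat) ⬝ᵥ (C⁻¹ *ᵥ (x i - μhat))
          = (n : ℝ) * Real.log S.det + (n : ℝ) * (p : ℝ) ↔ C = S)) ∧
    (∀ C : Matrix (Fin p) (Fin p) ℝ, C.PosDef → C ≠ S →
      ∏ i, gaussianPdfReal μhat C (x i) < ∏ i, gaussianPdfReal μhat S (x i)) := by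

  have hn0 : (n : ℝ) ≠ 0 := by positivity
  have hnpos : (0:ℝ) < n := by positivity
  -- square root of S
  set R := (open scoped MatrixOrder in CFC.sqrt S) with hRdef
  have hRps : R.PosSemidef := by
    open scoped MatrixOrder in exact Matrix.nonneg_iff_posSemidef.mp (CFC.sqrt_nonneg S)
  have hRh : R.IsHermitian := hRps.1
  have hRR : R * R = S := by
    open scoped MatrixOrder in exact CFC.sqrt_mul_sqrt_self S hSpd.posSemidef.nonneg
  have hSdetpos : 0 < S.det := hSpd.det_pos
  have hRdet : R.det * R.det = S.det := by rw [← Matrix.det_mul, hRR]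
  have hRdetne : R.det ≠ 0 := by
    intro h; rw [h, mul_zero] at hRdet; exact hSdetpos.ne' hRdet.symm
  have hRu : IsUnit R := (Matrix.isUnit_iff_isUnit_det R).mpr hRdetne.isUnit
  have hRudet : IsUnit R.det := hRdetne.isUnit
  -- the sum of outer products equals n • S
  have hsumS : ∑ i, vecMulVec (x i - μhat) (x i - μhat) = (n : ℝ) • S := by
    rw [hS, smul_smul, mul_inv_cancel₀ hn0, one_smul]
  -- quadratic form sum as trace
  have hsumq : ∀ C : Matrix (Fin p) (Fin p) ℝ,
      ∑ i, (x i - μhat) ⬝ᵥ (C⁻¹ *ᵥ (x i - μhat)) = (n : ℝ) * (C⁻¹ * S).trace := by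
    intro C
    calc ∑ i, (x i - μhat) ⬝ᵥ (C⁻¹ *ᵥ (x i - μhat))
        = ∑ i, (C⁻¹ * vecMulVec (x i - μhat) (x i - μhat)).trace := by
          exact Finset.sum_congr rfl fun i _ => aux_quad_trace _ _
      _ = (C⁻¹ * ∑ i, vecMulVec (x i - μhat) (x i - μhat)).trace := by
          rw [Finset.mul_sum, Matrix.trace_sum]
      _ = (n : ℝ) * (C⁻¹ * S).trace := by
          rw [hsumS, Matrix.mul_smul, Matrix.trace_smul]; simp
  -- main analysis for each PD C
  have main : ∀ C : Matrix (Fin p) (Fin p) ℝ, C.PosDef →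
      ((n : ℝ) * Real.log S.det + (n : ℝ) * (p : ℝ)
          ≤ (n : ℝ) * Real.log C.det + ∑ i, (x i - μhat) ⬝ᵥ (C⁻¹ *ᵥ (x i - μhat))) ∧
      ((n : ℝ) * Real.log C.det + ∑ i, (x i - μhat) ⬝ᵥ (C⁻¹ *ᵥ (x i - μhat))
          = (n : ℝ) * Real.log S.det + (n : ℝ) * (p : ℝ) ↔ C = S) := by
    intro C hC
    have hCdetpos : 0 < C.det := hC.det_pos
    have hCdetne : C.det ≠ 0 := hCdetpos.ne'
    set M := R * C⁻¹ * R with hMdef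
    have hMpd : M.PosDef := aux_congr_posDef hC.inv hRh hRu
    have hMtr : M.trace = (C⁻¹ * S).trace := by
      rw [hMdef, Matrix.trace_mul_cycle, hRR, Matrix.trace_mul_comm]
    have hCinvdet : C⁻¹.det = C.det⁻¹ := by
      rw [Matrix.det_nonsing_inv, Ring.inverse_eq_inv]
    have hMdet : M.det = S.det * C.det⁻¹ := by
      rw [hMdef, Matrix.det_mul, Matrix.det_mul, hCinvdet]
      rw [← hRdet]; ring
    have hMlogdet : Real.log M.det = Real.log S.det - Real.log C.det := by
      rw [hMdet, Real.log_mul hSdetpos.ne' (inv_ne_zero hCdetne), Real.log_inv]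
      ring
    obtain ⟨hkey1, hkey2⟩ := aux_key hMpd
    have hM1 : M = 1 ↔ C = S := by
      constructor
      · intro h
        have h2 : C⁻¹ = R⁻¹ * R⁻¹ := by
          have h' := congrArg (fun A => R⁻¹ * A * R⁻¹) h
          simp only [hMdef] at h'
          rw [← Matrix.mul_assoc, ← Matrix.mul_assoc, Matrix.nonsing_inv_mul R hRudet,
            one_mul, Matrix.mul_assoc, Matrix.mul_nonsing_inv R hRudet, mul_one] at h'
          simpa using h'
        have h3 : C⁻¹ = S⁻¹ := by
          rw [h2, ← Matrix.mul_inv_rev, hRR]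
        have := congrArg (fun A => A⁻¹) h3
        simpa [Matrix.nonsing_inv_nonsing_inv C hCdetne.isUnit,
          Matrix.nonsing_inv_nonsing_inv S hSdetpos.ne'.isUnit] using this
      · intro h
        rw [hMdef, h, ← hRR, Matrix.mul_inv_rev]
        have e : R * (R⁻¹ * R⁻¹) * R = (R * R⁻¹) * (R⁻¹ * R) := by noncomm_ring
        rw [e, Matrix.mul_nonsing_inv R hRudet, Matrix.nonsing_inv_mul R hRudet, one_mul]
    constructor
    · rw [hsumq C]
      have : Real.log M.det + p ≤ M.trace := hkey1
      rw [hMlogdet, hMtr] at this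
      nlinarith [this, hnpos]
    · rw [hsumq C]
      rw [← hM1, ← hkey2, hMlogdet, hMtr]
      constructor
      · intro h; nlinarith [h, hnpos]
      · intro h; nlinarith [h, hnpos]
  refine ⟨main, ?_⟩
  -- likelihood part
  intro C hC hne
  have hCdetpos : 0 < C.det := hC.det_pos
  have hprod : ∀ (D : Matrix (Fin p) (Fin p) ℝ), 0 < D.det →
      ∏ i, gaussianPdfReal μhat D (x i) =
        Real.exp (-(1/2) * ((n : ℝ) * Real.log ((2 * Real.pi) ^ p * D.det)
          + ∑ i, (x i - μhat) ⬝ᵥ (D⁻¹ *ᵥ (x i - μhat)))) := by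
    intro D hD
    have ha : (0:ℝ) < (2 * Real.pi) ^ p * D.det := by
      apply mul_pos (pow_pos (by positivity) p) hD
    calc ∏ i, gaussianPdfReal μhat D (x i)
        = ∏ i, Real.exp (Real.log ((2 * Real.pi) ^ p * D.det) * (-(1:ℝ)/2)
            + (-((x i - μhat) ⬝ᵥ (D⁻¹ *ᵥ (x i - μhat))) / 2)) := by
          refine Finset.prod_congr rfl fun i _ => ?_
          rw [gaussianPdfReal, Real.rpow_def_of_pos ha, Real.exp_add]
      _ = Real.exp (∑ i, (Real.log ((2 * Real.pi) ^ p * D.det) * (-(1:ℝ)/2)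
            + (-((x i - μhat) ⬝ᵥ (D⁻¹ *ᵥ (x i - μhat))) / 2))) := by
          rw [Real.exp_sum]
      _ = _ := by
          congr 1
          rw [Finset.sum_add_distrib, Finset.sum_const, Finset.card_univ, Fintype.card_fin]
          have e2 : ∑ i, (-((x i - μhat) ⬝ᵥ (D⁻¹ *ᵥ (x i - μhat))) / 2)
              = -(∑ i, (x i - μhat) ⬝ᵥ (D⁻¹ *ᵥ (x i - μhat))) / 2 := by
            rw [← Finset.sum_div, ← Finset.sum_neg_distrib]
          rw [e2]; ring
  rw [hprod C hCdetpos, hprod S hSdetpos]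
  apply Real.exp_lt_exp.mpr
  have h1 := (main C hC).1
  have h2 := (main C hC).2
  have hlt : (n : ℝ) * Real.log S.det + (n : ℝ) * (p : ℝ)
      < (n : ℝ) * Real.log C.det + ∑ i, (x i - μhat) ⬝ᵥ (C⁻¹ *ᵥ (x i - μhat)) := by
    rcases lt_or_eq_of_le h1 with h | h
    · exact h
    · exact absurd (h2.mp h.symm) hne
  have hSsum : ∑ i, (x i - μhat) ⬝ᵥ (S⁻¹ *ᵥ (x i - μhat)) = (n : ℝ) * (p : ℝ) := by
    rw [hsumq S, Matrix.nonsing_inv_mul S hSdetpos.ne'.isUnit, Matrix.trace_one]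
    simp
  have hlogC : Real.log ((2 * Real.pi) ^ p * C.det)
      = p * Real.log (2 * Real.pi) + Real.log C.det := by
    rw [Real.log_mul (by positivity) hCdetpos.ne', Real.log_pow]
  have hlogS : Real.log ((2 * Real.pi) ^ p * S.det)
      = p * Real.log (2 * Real.pi) + Real.log S.det := by
    rw [Real.log_mul (by positivity) hSdetpos.ne', Real.log_pow]
  rw [hlogC, hlogS, hSsum]
  nlinarith [hlt]
end

section
/- Let y_1, …, y_n ∈ ℝ^p, μ̂ = (1/n)Σ_i y_i, and S = (1/n)Σ_i (y_i − μ̂)(y_i − μ̂)ᵀ the sample covariance matrix. Let a^1, …, a^p be an orthonormal basis of ℝ^p consisting of eigenvectors of S, with a^1, …, a^d associated to the d largest eigenvalues. Set x_i = (⟨a^1, y_i⟩, …, ⟨a^d, y_i⟩) ∈ ℝ^d and z_i = (⟨a^{d+1}, y_i⟩, …, ⟨a^p, y_i⟩) ∈ ℝ^{p−d}, and let X̄, Z̄ be the corresponding centered data matrices (rows x_i − μ̂_x and z_i − μ̂_z respectively, where μ̂_x, μ̂_z are the sample means of the x_i and z_i). Then X̄ᵀZ̄ = 0; consequently, if X̄ᵀX̄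 is invertible, the least-squares regression matrix R̂ = (X̄ᵀX̄)⁻¹X̄ᵀZ̄ is the zero matrix, and the estimated linear auto-associative model is the orthogonal projection ŷ(y) = μ̂ + Σ_{i=1}^d ⟨a^i, y − μ̂⟩ a^i obtained by PCA. -/
open Matrix

lemma aux_onb_decomp {p : ℕ} (a : Fin p → Fin p → ℝ)
    (horth : ∀ k l : Fin p, a k ⬝ᵥ a l = if k = l then 1 else 0)
    (v : Fin p → ℝ) : ∑ k, (a k ⬝ᵥ v) • a k = v := by
  set A : Matrix (Fin p) (Fin p) ℝ := Matrix.of a with hA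
  have h1 : A * Aᵀ = 1 := by
    ext k l
    simpa [Matrix.mul_apply, Matrix.one_apply, hA, dotProduct] using horth k l
  have h2 : Aᵀ * A = 1 := mul_eq_one_comm.mp h1
  have h3 : ∑ k, (a k ⬝ᵥ v) • a k = Aᵀ *ᵥ (A *ᵥ v) := by
    ext j
    simp [Matrix.mulVec, dotProduct, Finset.sum_apply, Matrix.transpose_apply, hA,
      mul_comm]
  rw [h3, Matrix.mulVec_mulVec, h2, Matrix.one_mulVec]

lemma aux_dp_sum {n p : ℕ} (f : Fin n → Fin p → ℝ) (v : Fin p → ℝ) :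
    v ⬝ᵥ (∑ i, f i) = ∑ i, v ⬝ᵥ f i := by
  simp only [dotProduct, Finset.sum_apply, Finset.mul_sum]
  rw [Finset.sum_comm]

lemma aux_sum_mulVec {n p : ℕ} (M : Fin n → Matrix (Fin p) (Fin p) ℝ) (v : Fin p → ℝ) :
    (∑ i, M i) *ᵥ v = ∑ i, M i *ᵥ v := by
  ext j
  simp only [Matrix.mulVec, dotProduct, Finset.sum_apply, Matrix.sum_apply, Finset.sum_mul]
  rw [Finset.sum_comm]

lemma aux_vmv {p : ℕ} (u v : Fin p → ℝ) : vecMulVec u u *ᵥ v = (u ⬝ᵥ v) • u := by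
  ext j
  simp only [Matrix.mulVec, dotProduct, vecMulVec_apply, Pi.smul_apply, smul_eq_mul,
    Finset.sum_mul]
  refine Finset.sum_congr rfl fun m _ => by ring


/-- Theorem 3.1 of the paper: if the projection directions `a^1, …, a^d`
are the eigenvectors of the sample covariance matrix `S` associated with the `d` largest
eigenvalues (completed into an orthonormal eigenbasis `a^1, …, a^p`), then the centered
projected data `X̄` and the centered remaining data `Z̄` satisfy `X̄ᵀ Z̄ = 0`, so the
least-squares regression matrix `R̂ = (X̄ᵀX̄)⁻¹ X̄ᵀ Z̄` vanishes, and the estimated linear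
auto-associative model is the orthogonal projection `ŷ(w) = μ̂ + ∑ i ⟨a^i, w - μ̂⟩ a^i`
obtained by PCA. -/
theorem semilinear_pca_linear_case {n p d : ℕ} (hdp : d ≤ p) (hn : 1 ≤ n)
    (y : Fin n → Fin p → ℝ)
    (μhat : Fin p → ℝ) (hμhat : μhat = (n : ℝ)⁻¹ • ∑ i, y i)
    (S : Matrix (Fin p) (Fin p) ℝ)
    (hS : S = (n : ℝ)⁻¹ • ∑ i, vecMulVec (y i - μhat) (y i - μhat))
    (a : Fin p → Fin p → ℝ)
    (horth : ∀ k l : Fin p, a k ⬝ᵥ a l = if k = l then 1 else 0)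
    (lam : Fin p → ℝ) (heig : ∀ k, S *ᵥ a k = lam k • a k)
    (hsort : ∀ k l : Fin p, k ≤ l → lam l ≤ lam k)
    (x : Fin n → Fin d → ℝ) (hx : ∀ i j, x i j = a (Fin.castLE hdp j) ⬝ᵥ y i)
    (z : Fin n → Fin (p - d) → ℝ)
    (hz : ∀ i (j : Fin (p - d)), z i j = a ⟨d + (j : ℕ), by omega⟩ ⬝ᵥ y i)
    (μx : Fin d → ℝ) (hμx : μx = (n : ℝ)⁻¹ • ∑ i, x i)
    (μz : Fin (p - d) → ℝ) (hμz : μz = (n : ℝ)⁻¹ • ∑ i, z i)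
    (X : Matrix (Fin n) (Fin d) ℝ) (hX : X = Matrix.of fun i j => x i j - μx j)
    (Z : Matrix (Fin n) (Fin (p - d)) ℝ) (hZ : Z = Matrix.of fun i j => z i j - μz j) :
    Xᵀ * Z = 0 ∧
    (Xᵀ * X)⁻¹ * Xᵀ * Z = 0 ∧
    (∀ w : Fin p → ℝ,
      (∑ j : Fin d, (a (Fin.castLE hdp j) ⬝ᵥ w) • a (Fin.castLE hdp j)) +
        (∑ j : Fin (p - d), μz j • a ⟨d + (j : ℕ), by omega⟩)
      = μhat + ∑ j : Fin d, (a (Fin.castLE hdp j) ⬝ᵥ (w - μhat)) • a (Fin.castLE hdp j)) := by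
  have hn0 : (n : ℝ) ≠ 0 := by positivity
  have hmean : ∀ k : Fin p, (n : ℝ)⁻¹ * ∑ i, a k ⬝ᵥ y i = a k ⬝ᵥ μhat := by
    intro k
    rw [hμhat, dotProduct_smul, aux_dp_sum, smul_eq_mul]
  have hμx' : ∀ j, μx j = a (Fin.castLE hdp j) ⬝ᵥ μhat := by
    intro j
    rw [hμx, ← hmean]
    simp [hx, Finset.sum_apply]
  have hμz' : ∀ j : Fin (p - d), μz j = a ⟨d + (j : ℕ), by omega⟩ ⬝ᵥ μhat := by
    intro j
    rw [hμz, ← hmean]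
    simp [hz, Finset.sum_apply]
  have hXent : ∀ i j, X i j = a (Fin.castLE hdp j) ⬝ᵥ (y i - μhat) := by
    intro i j
    simp [hX, hx, hμx' j, dotProduct_sub]
  have hZent : ∀ i (j : Fin (p - d)), Z i j = a ⟨d + (j : ℕ), by omega⟩ ⬝ᵥ (y i - μhat) := by
    intro i j
    simp [hZ, hz, hμz' j, dotProduct_sub]
  have key : ∀ k l : Fin p, k ≠ l →
      ∑ i, (a k ⬝ᵥ (y i - μhat)) * (a l ⬝ᵥ (y i - μhat)) = 0 := by
    intro k l hkl
    have h1 : a k ⬝ᵥ (S *ᵥ a l) = 0 := by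
      rw [heig l]
      simp [dotProduct_smul, horth k l, hkl]
    have h2 : a k ⬝ᵥ (S *ᵥ a l) =
        (n : ℝ)⁻¹ * ∑ i, (a k ⬝ᵥ (y i - μhat)) * (a l ⬝ᵥ (y i - μhat)) := by
      rw [hS, Matrix.smul_mulVec, dotProduct_smul, smul_eq_mul, aux_sum_mulVec,
        aux_dp_sum]
      congr 1
      refine Finset.sum_congr rfl fun i _ => ?_
      rw [aux_vmv, dotProduct_smul, smul_eq_mul, mul_comm, dotProduct_comm (y i - μhat) (a l)]
    have h3 := h1.symm.trans h2
    exact ((mul_eq_zero.mp h3.symm).resolve_left (inv_ne_zero hn0))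
  have hXZ : Xᵀ * Z = 0 := by
    ext j k
    have hne : Fin.castLE hdp j ≠ (⟨d + (k : ℕ), by omega⟩ : Fin p) := by
      intro h
      have := congrArg Fin.val h
      simp [Fin.castLE] at this
      omega
    simp only [Matrix.mul_apply, Matrix.transpose_apply, Matrix.zero_apply]
    calc ∑ i, X i j * Z i k
        = ∑ i, (a (Fin.castLE hdp j) ⬝ᵥ (y i - μhat)) *
            (a ⟨d + (k : ℕ), by omega⟩ ⬝ᵥ (y i - μhat)) := by
          refine Finset.sum_congr rfl fun i _ => ?_
          rw [hXent, hZent]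
      _ = 0 := key _ _ hne
  refine ⟨hXZ, ?_, ?_⟩
  · rw [Matrix.mul_assoc, hXZ, Matrix.mul_zero]
  · intro w
    have hsplit : ∀ f : Fin p → (Fin p → ℝ), ∑ k, f k =
        ∑ j : Fin d, f (Fin.castLE hdp j) +
        ∑ j : Fin (p - d), f ⟨d + (j : ℕ), by omega⟩ := by
      intro f
      have hpd : d + (p - d) = p := by omega
      rw [← Fintype.sum_equiv (finCongr hpd) (fun k => f (finCongr hpd k)) f (fun k => rfl),
        Fin.sum_univ_add]
      congr 1 <;> refine Finset.sum_congr rfl fun j _ => ?_ <;> congr 1 <;>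
        apply Fin.ext <;> simp
    have hdec := aux_onb_decomp a horth μhat
    rw [hsplit (fun k => (a k ⬝ᵥ μhat) • a k)] at hdec
    have goal2 : ∑ j : Fin (p - d), μz j • a ⟨d + (j : ℕ), by omega⟩ =
        μhat - ∑ j : Fin d, (a (Fin.castLE hdp j) ⬝ᵥ μhat) • a (Fin.castLE hdp j) := by
      have hμzsum : ∑ j : Fin (p - d), μz j • (a ⟨d + (j : ℕ), by omega⟩ : Fin p → ℝ) =
          ∑ j : Fin (p - d), (a ⟨d + (j : ℕ), by omega⟩ ⬝ᵥ μhat) • a ⟨d + (j : ℕ), by omega⟩ :=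
        Finset.sum_congr rfl fun j _ => by rw [hμz' j]
      rw [hμzsum, eq_sub_iff_add_eq, add_comm]
      exact hdec
    rw [goal2]
    simp only [dotProduct_sub, sub_smul]
    rw [Finset.sum_sub_distrib]
    abel
end
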